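/- arXiv:1401.6392 — 2 statements merged into one kernel-verified Lean document; each statement's English description precedes it below -/
import Mathlib

section
/- Let p₁, p₂ ∈ ℝ[x,y,z] be nonzero polynomials with no common irreducible factor. Then the number of lines in ℝ³ simultaneously contained in the zero set of p₁ and the zero set of p₂ is at most (deg p₁)·(deg p₂). -/
open MvPolynomial

/-- A line in `ℝ³`, as a set of points. -/
def IsLine (l : Set (Fin 3 → ℝ)) : Prop :=
  ∃ a v : Fin 3 → ℝ, v ≠ 0 ∧ l = {x | ∃ t : ℝ, x = a + t • v}

open Matrix

lemma line_eq_of_two_mem {l l' : Set (Fin 3 → ℝ)} (hl : IsLine l) (hl' : IsLine l')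
    {x y : Fin 3 → ℝ} (hxy : x ≠ y) (hx : x ∈ l) (hy : y ∈ l) (hx' : x ∈ l') (hy' : y ∈ l') :
    l = l' := by
  suffices H : ∀ l : Set (Fin 3 → ℝ), IsLine l → x ∈ l → y ∈ l →
      l = {z | ∃ s : ℝ, z = x + s • (y - x)} by
    rw [H l hl hx hy, H l' hl' hx' hy']
  rintro l ⟨a, v, hv, rfl⟩ ⟨t₁, rfl⟩ ⟨t₂, rfl⟩
  have hc : t₂ - t₁ ≠ 0 := by
    intro h
    apply hxy
    have : t₁ = t₂ := by linarith [sub_eq_zero.mp h]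
    rw [this]
  ext z
  constructor
  · rintro ⟨t, rfl⟩
    refine ⟨(t - t₁) / (t₂ - t₁), ?_⟩
    funext i
    simp only [Pi.add_apply, Pi.smul_apply, Pi.sub_apply, smul_eq_mul]
    field_simp
    ring
  · rintro ⟨s, rfl⟩
    refine ⟨t₁ + s * (t₂ - t₁), ?_⟩
    funext i
    simp only [Pi.add_apply, Pi.smul_apply, Pi.sub_apply, smul_eq_mul]
    ring

noncomputable def affPoly (w : Fin 3 → ℝ) (c : ℝ) : MvPolynomial (Fin 3) ℝ :=
  (∑ i, C (w i) * X i) + C c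

lemma affPoly_totalDegree (w : Fin 3 → ℝ) (c : ℝ) : (affPoly w c).totalDegree ≤ 1 := by
  refine (totalDegree_add _ _).trans (max_le ?_ (by simp [totalDegree_C]))
  refine (totalDegree_finset_sum _ _).trans (Finset.sup_le fun i _ => ?_)
  refine (totalDegree_mul _ _).trans ?_
  simp [totalDegree_C, totalDegree_X]

lemma affPoly_eval (w : Fin 3 → ℝ) (c : ℝ) (z : Fin 3 → ℝ) :
    eval z (affPoly w c) = w ⬝ᵥ z + c := by
  simp [affPoly, dotProduct]

lemma dot_self_ne_zero {w : Fin 3 → ℝ} (hw : w ≠ 0) : w ⬝ᵥ w ≠ 0 := by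
  rw [Ne, dotProduct_self_eq_zero]; exact hw

/-- separating affine polynomial: vanishes on the line through `a` with direction `v`,
nonzero at `q ∉` the line. -/
lemma exists_aff_vanish_line {a v q : Fin 3 → ℝ} (hv : v ≠ 0)
    (hq : q ∉ {x | ∃ t : ℝ, x = a + t • v}) :
    ∃ p : MvPolynomial (Fin 3) ℝ, p.totalDegree ≤ 1 ∧
      (∀ x ∈ {x : Fin 3 → ℝ | ∃ t : ℝ, x = a + t • v}, eval x p = 0) ∧ eval q p ≠ 0 := by
  set u := q - a with hu
  set cc := (u ⬝ᵥ v) / (v ⬝ᵥ v) with hcc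
  set w := u - cc • v with hw
  have hvv : v ⬝ᵥ v ≠ 0 := dot_self_ne_zero hv
  have hwv : w ⬝ᵥ v = 0 := by
    rw [hw, sub_dotProduct, smul_dotProduct, smul_eq_mul, hcc,
      div_mul_cancel₀ _ hvv, sub_self]
  have hwne : w ≠ 0 := by
    intro h
    apply hq
    refine ⟨cc, ?_⟩
    have : u = cc • v := by rwa [hw, sub_eq_zero] at h
    rw [← this, hu]; funext i; simp
  have hwu : w ⬝ᵥ u ≠ 0 := by
    have h3 : w ⬝ᵥ u = w ⬝ᵥ w := by
      have h4 : u = w + cc • v := (sub_add_cancel u (cc • v)).symm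
      rw [h4, dotProduct_add, dotProduct_smul, hwv]
      simp
    rw [h3]
    exact dot_self_ne_zero hwne
  refine ⟨affPoly w (-(w ⬝ᵥ a)), affPoly_totalDegree _ _, ?_, ?_⟩
  · rintro x ⟨t, rfl⟩
    rw [affPoly_eval, dotProduct_add, dotProduct_smul, hwv, smul_zero, add_zero,
      add_neg_cancel]
  · rw [affPoly_eval]
    have h5 : w ⬝ᵥ q + -(w ⬝ᵥ a) = w ⬝ᵥ u := by rw [hu, dotProduct_sub]; ring
    rw [h5]
    exact hwu

/-- affine polynomial vanishing at `x`, nonzero at `y ≠ x`. -/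
lemma exists_aff_sep {x y : Fin 3 → ℝ} (hxy : x ≠ y) :
    ∃ p : MvPolynomial (Fin 3) ℝ, p.totalDegree ≤ 1 ∧ eval x p = 0 ∧ eval y p ≠ 0 := by
  refine ⟨affPoly (y - x) (-((y - x) ⬝ᵥ x)), affPoly_totalDegree _ _, ?_, ?_⟩
  · rw [affPoly_eval]; ring
  · rw [affPoly_eval]
    have h2 : (y - x) ⬝ᵥ y + -((y - x) ⬝ᵥ x) = (y - x) ⬝ᵥ (y - x) := by
      rw [dotProduct_sub]; ring
    rw [h2]
    exact dot_self_ne_zero (sub_ne_zero.mpr hxy.symm)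

section DegMul
variable {σ : Type*}

lemma homogeneousComponent_totalDegree_ne_zero {p : MvPolynomial σ ℝ} (hp : p ≠ 0) :
    homogeneousComponent p.totalDegree p ≠ 0 := by
  classical
  obtain ⟨d, hd, hdeg⟩ : ∃ d ∈ p.support, (fun m : σ →₀ ℕ => m.sum fun _ e => e) d
      = p.totalDegree := by
    obtain ⟨d, hd, h⟩ := Finset.exists_mem_eq_sup p.support
      (support_nonempty.mpr hp) (fun m : σ →₀ ℕ => m.sum fun _ e => e)
    exact ⟨d, hd, h.symm⟩
  intro h0
  have hcd : coeff d (homogeneousComponent p.totalDegree p) = coeff d p := by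
    rw [coeff_homogeneousComponent, if_pos]
    simpa [Finsupp.degree_apply, Finsupp.sum] using hdeg
  rw [h0] at hcd
  simp only [coeff_zero] at hcd
  exact (mem_support_iff.mp hd) hcd.symm

lemma totalDegree_sum_lower {p : MvPolynomial σ ℝ} {a : ℕ} (ha : 0 < a) :
    (∑ i ∈ Finset.range a, homogeneousComponent i p).totalDegree < a := by
  refine lt_of_le_of_lt (totalDegree_finset_sum _ _) ?_
  rw [Finset.sup_lt_iff (by simpa using ha)]
  intro i hi
  exact lt_of_le_of_lt ((homogeneousComponent_isHomogeneous i p).totalDegree_le)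
    (Finset.mem_range.mp hi)

lemma totalDegree_mul_eq_add {p q : MvPolynomial σ ℝ} (hp : p ≠ 0) (hq : q ≠ 0) :
    (p * q).totalDegree = p.totalDegree + q.totalDegree := by
  classical
  refine le_antisymm (totalDegree_mul p q) ?_
  by_contra hcon
  push_neg at hcon
  set a := p.totalDegree with ha
  set b := q.totalDegree with hb
  set pa := homogeneousComponent a p with hpa
  set qb := homogeneousComponent b q with hqb
  set p' := p - pa with hp'
  set q' := q - qb with hq'
  have hpsum : p' = ∑ i ∈ Finset.range a, homogeneousComponent i p := by
    have h := sum_homogeneousComponent p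
    rw [Finset.sum_range_succ] at h
    rw [hp', hpa]; exact (eq_sub_of_add_eq h).symm
  have hqsum : q' = ∑ i ∈ Finset.range b, homogeneousComponent i q := by
    have h := sum_homogeneousComponent q
    rw [Finset.sum_range_succ] at h
    rw [hq', hqb]; exact (eq_sub_of_add_eq h).symm
  have hp'deg : p' = 0 ∨ p'.totalDegree < a := by
    rcases Nat.eq_zero_or_pos a with h | h
    · left; rw [hpsum, h]; simp
    · right; rw [hpsum]; exact totalDegree_sum_lower h
  have hq'deg : q' = 0 ∨ q'.totalDegree < b := by
    rcases Nat.eq_zero_or_pos b with h | h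
    · left; rw [hqsum, h]; simp
    · right; rw [hqsum]; exact totalDegree_sum_lower h
  have hrest : p * q = pa * qb + (p' * q + pa * q') := by rw [hp', hq']; ring
  have hPQhom : (pa * qb).IsHomogeneous (a + b) :=
    ((homogeneousComponent_isHomogeneous a p).mul (homogeneousComponent_isHomogeneous b q))
  have hcomp : homogeneousComponent (a + b) (p * q) = pa * qb := by
    have e1 : homogeneousComponent (a + b) (pa * qb) = pa * qb := by
      rw [homogeneousComponent_of_mem ((mem_homogeneousSubmodule _ _).mpr hPQhom)]
      simp
    have e2 : homogeneousComponent (a + b) (p' * q) = 0 := by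
      rcases hp'deg with h | h
      · rw [h, zero_mul, map_zero]
      · refine homogeneousComponent_eq_zero _ _ ?_
        refine lt_of_le_of_lt (totalDegree_mul _ _) ?_
        omega
    have e3 : homogeneousComponent (a + b) (pa * q') = 0 := by
      rcases hq'deg with h | h
      · rw [h, mul_zero, map_zero]
      · refine homogeneousComponent_eq_zero _ _ ?_
        refine lt_of_le_of_lt (totalDegree_mul _ _) ?_
        have := (homogeneousComponent_isHomogeneous a p).totalDegree_le
        rw [← hpa] at this
        omega
    rw [hrest, map_add, map_add, e1, e2, e3, add_zero, add_zero]
  have hne : pa * qb ≠ 0 :=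
    mul_ne_zero (homogeneousComponent_totalDegree_ne_zero hp)
      (homogeneousComponent_totalDegree_ne_zero hq)
  apply hne
  rw [← hcomp]
  exact homogeneousComponent_eq_zero _ _ hcon
end DegMul

noncomputable section Counting

abbrev fdeg (α : Fin 3 →₀ ℕ) : ℕ := α.sum fun _ e => e

lemma apply_le_fdeg (α : Fin 3 →₀ ℕ) (i : Fin 3) : α i ≤ fdeg α := by
  by_cases h : i ∈ α.support
  · exact Finset.single_le_sum (f := fun j => α j) (fun _ _ => Nat.zero_le _) h
  · simp [Finsupp.notMem_support_iff.mp h]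

lemma fdeg_eq_sum (α : Fin 3 →₀ ℕ) : fdeg α = α 0 + α 1 + α 2 := by
  rw [fdeg, Finsupp.sum_fintype _ _ (fun _ => rfl), Fin.sum_univ_three]

def TT (k : ℕ) : Finset (Fin 3 →₀ ℕ) :=
  (Finset.Iic (Finsupp.equivFunOnFinite.symm fun _ => k)).filter (fun α => fdeg α ≤ k)

lemma mem_TT {k : ℕ} {α : Fin 3 →₀ ℕ} : α ∈ TT k ↔ fdeg α ≤ k := by
  rw [TT, Finset.mem_filter, Finset.mem_Iic]
  constructor
  · exact fun h => h.2
  · intro h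
    refine ⟨?_, h⟩
    intro i
    exact le_trans (apply_le_fdeg α i) (by simpa using h)

lemma TT_mono {k K : ℕ} (h : k ≤ K) : TT k ⊆ TT K := fun α hα =>
  mem_TT.mpr (le_trans (mem_TT.mp hα) h)

lemma shell_card_bound {d₁ d₂ D : ℕ} (h1 : 1 ≤ d₁) (h2 : 1 ≤ d₂) (hD : d₁ + d₂ ≤ D) :
    (TT D).card + (TT (D - d₁ - d₂)).card ≤
      (TT (D - d₁)).card + (TT (D - d₂)).card + d₁ * d₂ * (D + 1) := by
  classical
  set S₁ := TT D \ TT (D - d₁) with hS₁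
  set S₂ := TT (D - d₂) \ TT (D - d₁ - d₂) with hS₂
  have hc₁ : S₁.card + (TT (D - d₁)).card = (TT D).card :=
    Finset.card_sdiff_add_card_eq_card (TT_mono (by omega))
  have hc₂ : S₂.card + (TT (D - d₁ - d₂)).card = (TT (D - d₂)).card :=
    Finset.card_sdiff_add_card_eq_card (TT_mono (by omega))
  have key : S₁.card ≤ S₂.card + d₁ * d₂ * (D + 1) := by
    set φ : (Fin 3 →₀ ℕ) → (Fin 3 →₀ ℕ) := fun α => α + Finsupp.single 0 d₂ with hφ
    have hφdeg : ∀ α, fdeg (φ α) = fdeg α + d₂ := by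
      intro α
      rw [hφ]
      simp only []
      rw [fdeg_eq_sum, fdeg_eq_sum]
      simp [Finsupp.single_apply]
      omega
    set Bad := S₁.filter (fun α => α 0 < d₂) with hBad
    have hsubset : S₁ ⊆ S₂.image φ ∪ Bad := by
      intro α hα
      have hm := hα
      rw [hS₁, Finset.mem_sdiff, mem_TT] at hm
      have hup : fdeg α ≤ D := hm.1
      have hlow : D - d₁ < fdeg α := by
        rcases Nat.lt_or_ge (D - d₁) (fdeg α) with h | h
        · exact h
        · exact absurd (mem_TT.mpr h) hm.2
      rcases Nat.lt_or_ge (α 0) d₂ with h0 | h0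
      · exact Finset.mem_union_right _ (Finset.mem_filter.mpr ⟨hα, h0⟩)
      · refine Finset.mem_union_left _ ?_
        set β := α - Finsupp.single 0 d₂ with hβ
        have hαβ : φ β = α := by
          rw [hφ, hβ]
          ext i
          fin_cases i <;>
            simp [Finsupp.add_apply, Finsupp.tsub_apply, Finsupp.single_apply] <;> omega
        have hβdeg : fdeg β + d₂ = fdeg α := by rw [← hαβ, hφdeg]
        have hd₂ : d₂ ≤ fdeg α := le_trans h0 (apply_le_fdeg α 0)
        refine Finset.mem_image.mpr ⟨β, ?_, hαβ⟩
        rw [hS₂, Finset.mem_sdiff, mem_TT, mem_TT]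
        constructor
        · omega
        · intro hcon
          omega
    have himg : (S₂.image φ).card = S₂.card :=
      Finset.card_image_of_injective _ (add_left_injective _)
    have hbadcard : Bad.card ≤ d₁ * d₂ * (D + 1) := by
      have hinj : ∀ α ∈ Bad, ∀ β ∈ Bad,
          (((α 0 : ℕ), (D - fdeg α, α 1)) : ℕ × ℕ × ℕ) = ((β 0), (D - fdeg β, β 1)) → α = β := by
        intro α hα β hβ heq
        have hαm := Finset.mem_filter.mp hα
        have hβm := Finset.mem_filter.mp hβ
        have hα1 := hαm.1
        have hβ1 := hβm.1
        rw [hS₁, Finset.mem_sdiff, mem_TT] at hα1 hβ1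
        have hαup : fdeg α ≤ D := hα1.1
        have hβup : fdeg β ≤ D := hβ1.1
        obtain ⟨e0, e1, e2⟩ : α 0 = β 0 ∧ D - fdeg α = D - fdeg β ∧ α 1 = β 1 := by
          refine ⟨congrArg Prod.fst heq, ?_, ?_⟩
          · exact congrArg (fun x => x.2.1) heq
          · exact congrArg (fun x => x.2.2) heq
        have hdeq : fdeg α = fdeg β := by omega
        have hs1 := fdeg_eq_sum α
        have hs2 := fdeg_eq_sum β
        have e3 : α 2 = β 2 := by omega
        ext i
        fin_cases i
        · exact e0
        · exact e2
        · exact e3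
      have := Finset.card_le_card_of_injOn
        (s := Bad)
        (f := fun α : Fin 3 →₀ ℕ => ((α 0, (D - fdeg α, α 1)) : ℕ × ℕ × ℕ))
        (t := Finset.range d₂ ×ˢ Finset.range d₁ ×ˢ Finset.range (D + 1)) ?_ ?_
      · refine le_trans this ?_
        rw [Finset.card_product, Finset.card_product, Finset.card_range, Finset.card_range,
          Finset.card_range]
        exact Nat.le_of_eq (by ring)
      · intro α hα
        have hαm := Finset.mem_filter.mp hα
        have hα1 := hαm.1
        rw [hS₁, Finset.mem_sdiff, mem_TT] at hα1
        have hup : fdeg α ≤ D := hα1.1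
        have hlow : D - d₁ < fdeg α := by
          rcases Nat.lt_or_ge (D - d₁) (fdeg α) with h | h
          · exact h
          · exact absurd (mem_TT.mpr h) hα1.2
        simp only [Finset.mem_coe, Finset.mem_product, Finset.mem_range]
        refine ⟨hαm.2, by omega, ?_⟩
        exact lt_of_le_of_lt (apply_le_fdeg α 1) (by omega)
      · exact hinj
    calc S₁.card ≤ (S₂.image φ ∪ Bad).card := Finset.card_le_card hsubset
      _ ≤ (S₂.image φ).card + Bad.card := Finset.card_union_le _ _
      _ ≤ S₂.card + d₁ * d₂ * (D + 1) := by rw [himg]; omega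
  omega


lemma finrank_restrictTotalDegree (k : ℕ) :
    Module.finrank ℝ (restrictTotalDegree (Fin 3) ℝ k) = (TT k).card := by
  classical
  set Fs : Finset (MvPolynomial (Fin 3) ℝ) := (TT k).image (fun α => monomial α (1:ℝ)) with hFs
  have hspan : restrictTotalDegree (Fin 3) ℝ k = Submodule.span ℝ (Fs : Set _) := by
    apply le_antisymm
    · intro p hp
      rw [mem_restrictTotalDegree] at hp
      rw [p.as_sum]
      refine Submodule.sum_mem _ fun v hv => ?_
      have h1 : monomial v (coeff v p) = (coeff v p) • monomial v (1:ℝ) := by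
        rw [smul_monomial, smul_eq_mul, mul_one]
      rw [h1]
      refine Submodule.smul_mem _ _ (Submodule.subset_span ?_)
      simp only [hFs, Finset.coe_image, Set.mem_image, Finset.mem_coe]
      exact ⟨v, mem_TT.mpr (le_trans (le_totalDegree hv) hp), rfl⟩
    · rw [Submodule.span_le]
      intro x hx
      simp only [hFs, Finset.coe_image, Set.mem_image, Finset.mem_coe] at hx
      obtain ⟨α, hα, rfl⟩ := hx
      rw [SetLike.mem_coe, mem_restrictTotalDegree, totalDegree_monomial _ one_ne_zero]
      exact mem_TT.mp hα
  have hmono : Function.Injective (fun α : Fin 3 →₀ ℕ => monomial α (1:ℝ)) :=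
    monomial_left_injective one_ne_zero
  have hli : LinearIndependent ℝ (fun x : (Fs : Set (MvPolynomial (Fin 3) ℝ)) => (x : MvPolynomial (Fin 3) ℝ)) := by
    have hb : LinearIndepOn ℝ id (Set.range (basisMonomials (Fin 3) ℝ)) :=
      (linearIndepOn_id_range_iff (basisMonomials (Fin 3) ℝ).linearIndependent.injective).mpr
        (basisMonomials (Fin 3) ℝ).linearIndependent
    show LinearIndepOn ℝ id (Fs : Set (MvPolynomial (Fin 3) ℝ))
    refine hb.mono ?_
    intro x hx
    simp only [hFs, Finset.coe_image, Set.mem_image, Finset.mem_coe] at hx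
    obtain ⟨α, _, rfl⟩ := hx
    exact ⟨α, by rw [coe_basisMonomials]⟩
  rw [hspan, finrank_span_set_eq_card hli]
  rw [Finset.toFinset_coe]
  exact Finset.card_image_of_injective _ hmono

end Counting
lemma exists_inj_avoid (S : Set ℝ) (hS : S.Finite) (m : ℕ) :
    ∃ g : Fin m → ℝ, Function.Injective g ∧ ∀ j, g j ∉ S := by
  have hinf : Sᶜ.Infinite := hS.infinite_compl
  obtain ⟨T, hTsub, hTfin, hTcard⟩ := hinf.exists_subset_ncard_eq m
  haveI := hTfin.fintype
  have hcard : Fintype.card T = m := by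
    rw [← Nat.card_eq_fintype_card, Nat.card_coe_set_eq, hTcard]
  refine ⟨fun j => ((Fintype.equivFinOfCardEq hcard).symm j : T), ?_, ?_⟩
  · exact Subtype.val_injective.comp (Equiv.injective _)
  · intro j
    exact hTsub ((Fintype.equivFinOfCardEq hcard).symm j).2

lemma param_inj {a v : Fin 3 → ℝ} (hv : v ≠ 0) {t t' : ℝ}
    (h : a + t • v = a + t' • v) : t = t' := by
  have h1 : t • v = t' • v := add_left_cancel h
  have h2 : (t - t') • v = 0 := by rw [sub_smul, h1, sub_self]
  rcases smul_eq_zero.mp h2 with h3 | h3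
  · linarith [sub_eq_zero.mp (by exact_mod_cast h3)]
  · exact absurd h3 hv

noncomputable def evalLM (x : Fin 3 → ℝ) : MvPolynomial (Fin 3) ℝ →ₗ[ℝ] ℝ :=
  { toFun := eval x, map_add' := fun _ _ => by simp,
    map_smul' := fun c p => by simp [smul_eval] }

@[simp] lemma evalLM_apply (x : Fin 3 → ℝ) (p : MvPolynomial (Fin 3) ℝ) :
    evalLM x p = eval x p := rfl

lemma master (d₁ d₂ n m D : ℕ) {p₁ p₂ : MvPolynomial (Fin 3) ℝ}
    (h₁ : p₁ ≠ 0) (h₂ : p₂ ≠ 0) (hrp : IsRelPrime p₁ p₂)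
    (hdeg1 : p₁.totalDegree = d₁) (hdeg2 : p₂.totalDegree = d₂)
    (hd₁ : 1 ≤ d₁) (hd₂ : 1 ≤ d₂)
    (hn : n = d₁ * d₂ + 1) (hm : m = (d₁ * d₂) ^ 2 + 1)
    (hD : D = d₁ * d₂ + (d₁ * d₂) ^ 2)
    (L : Fin n → Set (Fin 3 → ℝ))
    (hLinj : Function.Injective L)
    (hline : ∀ i, IsLine (L i))
    (hz1 : ∀ i, L i ⊆ {x | eval x p₁ = 0}) (hz2 : ∀ i, L i ⊆ {x | eval x p₂ = 0}) :
    False := by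
  classical
  have hdD : d₁ + d₂ ≤ D := by
    have h3 : d₁ + d₂ ≤ d₁ * d₂ + 1 := by nlinarith
    have h2 : 1 ≤ (d₁ * d₂) ^ 2 := Nat.one_le_pow _ _ (Nat.mul_pos (by omega) (by omega))
    omega
  have hd₁D : d₁ ≤ D := le_trans (by omega) hdD
  have hd₂D : d₂ ≤ D := le_trans (by omega) hdD
  -- line data
  choose a v hv hLeq using hline
  -- choose sample points on each line avoiding all other lines
  have hBfin : ∀ i, (⋃ k : Fin n, {t : ℝ | k ≠ i ∧ (a i + t • v i) ∈ L k}).Finite := by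
    intro i
    refine Set.finite_iUnion fun k => Set.Subsingleton.finite ?_
    intro t ht t' ht'
    by_contra htt
    have hxy : a i + t • v i ≠ a i + t' • v i := fun hctr => htt (param_inj (hv i) hctr)
    have hmem : ∀ s : ℝ, a i + s • v i ∈ L i := by
      intro s; rw [hLeq i]; exact ⟨s, rfl⟩
    have heq := line_eq_of_two_mem ⟨a i, v i, hv i, hLeq i⟩ ⟨a k, v k, hv k, hLeq k⟩
      hxy (hmem t) (hmem t') ht.2 ht'.2
    exact ht.1 (hLinj heq.symm)
  choose tf htfinj htfavoid using fun i => exists_inj_avoid _ (hBfin i) m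
  set P : Fin n → Fin m → (Fin 3 → ℝ) := fun i j => a i + (tf i j) • v i with hP
  have hPmem : ∀ i j, P i j ∈ L i := by
    intro i j; rw [hLeq i]; exact ⟨tf i j, rfl⟩
  have hPnot : ∀ i j k, k ≠ i → P i j ∉ L k := by
    intro i j k hk hmem
    exact htfavoid i j (Set.mem_iUnion.mpr ⟨k, hk, hmem⟩)
  have hPinj : ∀ i, Function.Injective (P i) :=
    fun i j j' hjj => htfinj i (param_inj (hv i) hjj)
  -- separating polynomials
  have hsepline : ∀ i j k, k ≠ i → ∃ p : MvPolynomial (Fin 3) ℝ, p.totalDegree ≤ 1 ∧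
      (∀ x ∈ L k, eval x p = 0) ∧ eval (P i j) p ≠ 0 := by
    intro i j k hk
    have hq : P i j ∉ {x : Fin 3 → ℝ | ∃ t : ℝ, x = a k + t • v k} := by
      rw [← hLeq k]; exact hPnot i j k hk
    obtain ⟨p, hdeg, hvan, hne⟩ := exists_aff_vanish_line (hv k) hq
    exact ⟨p, hdeg, fun x hx => hvan x (by rwa [← hLeq k]), hne⟩
  choose ll hlldeg hllvan hllne using hsepline
  have hseppt : ∀ i j l, l ≠ j → ∃ p : MvPolynomial (Fin 3) ℝ, p.totalDegree ≤ 1 ∧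
      eval (P i l) p = 0 ∧ eval (P i j) p ≠ 0 := by
    intro i j l hl
    exact exists_aff_sep (fun hctr => hl (hPinj i hctr))
  choose hh hhhdeg hhhvan hhhne using hseppt
  -- the interpolation polynomials
  set F : Fin n → Fin m → MvPolynomial (Fin 3) ℝ := fun i j =>
    (∏ k ∈ Finset.univ.erase i, if h : k ≠ i then ll i j k h else 1) *
    (∏ l ∈ Finset.univ.erase j, if h : l ≠ j then hh i j l h else 1) with hF
  have hFdeg : ∀ i j, (F i j).totalDegree ≤ D := by
    intro i j
    refine le_trans (totalDegree_mul _ _) ?_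
    have hb1 : (∏ k ∈ Finset.univ.erase i,
        if h : k ≠ i then ll i j k h else 1).totalDegree ≤ n - 1 := by
      refine le_trans (totalDegree_finset_prod _ _) ?_
      have hone : ∀ k ∈ Finset.univ.erase i,
          (if h : k ≠ i then ll i j k h else 1).totalDegree ≤ 1 := by
        intro k hk
        rw [dif_pos (Finset.mem_erase.mp hk).1]
        exact hlldeg i j k _
      refine le_trans (Finset.sum_le_card_nsmul _ _ 1 hone) ?_
      simp [Finset.card_erase_of_mem]
    have hb2 : (∏ l ∈ Finset.univ.erase j,
        if h : l ≠ j then hh i j l h else 1).totalDegree ≤ m - 1 := by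
      refine le_trans (totalDegree_finset_prod _ _) ?_
      have hone : ∀ l ∈ Finset.univ.erase j,
          (if h : l ≠ j then hh i j l h else 1).totalDegree ≤ 1 := by
        intro l hl
        rw [dif_pos (Finset.mem_erase.mp hl).1]
        exact hhhdeg i j l _
      refine le_trans (Finset.sum_le_card_nsmul _ _ 1 hone) ?_
      simp [Finset.card_erase_of_mem]
    omega
  have hFself : ∀ i j, eval (P i j) (F i j) ≠ 0 := by
    intro i j
    rw [hF]
    simp only [_root_.map_mul, map_prod]
    refine mul_ne_zero ?_ ?_
    · rw [Finset.prod_ne_zero_iff]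
      intro k hk
      rw [dif_pos (Finset.mem_erase.mp hk).1]
      exact hllne i j k _
    · rw [Finset.prod_ne_zero_iff]
      intro l hl
      rw [dif_pos (Finset.mem_erase.mp hl).1]
      exact hhhne i j l _
  have hFother : ∀ i j k l, (k, l) ≠ (i, j) → eval (P k l) (F i j) = 0 := by
    intro i j k l hne
    rw [hF]
    simp only [_root_.map_mul, map_prod]
    rcases Decidable.eq_or_ne k i with rfl | hk
    · have hl : l ≠ j := by
        intro hctr; exact hne (by rw [hctr])
      refine mul_eq_zero_of_right _ ?_
      refine Finset.prod_eq_zero (Finset.mem_erase.mpr ⟨hl, Finset.mem_univ l⟩) ?_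
      rw [dif_pos hl]
      exact hhhvan k j l hl
    · refine mul_eq_zero_of_left ?_ _
      refine Finset.prod_eq_zero (Finset.mem_erase.mpr ⟨hk, Finset.mem_univ k⟩) ?_
      rw [dif_pos hk]
      exact hllvan i j k hk (P k l) (hPmem k l)
  -- submodules
  set A : ℕ → Submodule ℝ (MvPolynomial (Fin 3) ℝ) :=
    fun k => restrictTotalDegree (Fin 3) ℝ k with hA
  have hmemA : ∀ (k : ℕ) (p : MvPolynomial (Fin 3) ℝ), p ∈ A k ↔ p.totalDegree ≤ k :=
    fun k p => mem_restrictTotalDegree _ _ _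
  have hM₁inj : Function.Injective (LinearMap.mulLeft ℝ p₁) := fun x y hxy =>
    mul_left_cancel₀ h₁ (by simpa using hxy)
  have hM₂inj : Function.Injective (LinearMap.mulLeft ℝ p₂) := fun x y hxy =>
    mul_left_cancel₀ h₂ (by simpa using hxy)
  set I₁ : Submodule ℝ (MvPolynomial (Fin 3) ℝ) :=
    (A (D - d₁)).map (LinearMap.mulLeft ℝ p₁) with hI₁
  set I₂ : Submodule ℝ (MvPolynomial (Fin 3) ℝ) :=
    (A (D - d₂)).map (LinearMap.mulLeft ℝ p₂) with hI₂
  have hI₁le : I₁ ≤ A D := by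
    rintro x ⟨y, hy, rfl⟩
    rw [SetLike.mem_coe, hmemA] at hy
    rw [hmemA, LinearMap.mulLeft_apply]
    refine le_trans (totalDegree_mul _ _) ?_
    rw [hdeg1]
    omega
  have hI₂le : I₂ ≤ A D := by
    rintro x ⟨y, hy, rfl⟩
    rw [SetLike.mem_coe, hmemA] at hy
    rw [hmemA, LinearMap.mulLeft_apply]
    refine le_trans (totalDegree_mul _ _) ?_
    rw [hdeg2]
    omega
  -- the syzygy bound
  have hsyz : I₁ ⊓ I₂ ≤ (A (D - d₁ - d₂)).map (LinearMap.mulLeft ℝ (p₁ * p₂)) := by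
    rintro x ⟨⟨y, hy, hyx⟩, ⟨z, hz, hzx⟩⟩
    simp only [LinearMap.mulLeft_apply] at hyx hzx
    have hdvd : p₂ ∣ p₁ * y := ⟨z, by rw [hyx, ← hzx]⟩
    have hdvd2 : p₂ ∣ y := (hrp.symm).dvd_of_dvd_mul_left hdvd
    obtain ⟨u, rfl⟩ := hdvd2
    rcases eq_or_ne u 0 with rfl | hu
    · have hx0 : x = 0 := by rw [← hyx]; simp
      rw [hx0]; exact Submodule.zero_mem _
    · refine ⟨u, ?_, ?_⟩
      · rw [SetLike.mem_coe, hmemA] at hy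
        rw [SetLike.mem_coe, hmemA]
        rw [totalDegree_mul_eq_add h₂ hu, hdeg2] at hy
        omega
      · rw [LinearMap.mulLeft_apply, ← hyx]
        ring
  -- evaluation map
  set E : MvPolynomial (Fin 3) ℝ →ₗ[ℝ] ((Fin n × Fin m) → ℝ) :=
    LinearMap.pi (fun q => evalLM (P q.1 q.2)) with hE
  set E' : ↥(A D) →ₗ[ℝ] ((Fin n × Fin m) → ℝ) := E.comp (A D).subtype with hE'
  have hsurj : Function.Surjective E' := by
    rw [← LinearMap.range_eq_top]
    rw [← top_le_iff, ← (Pi.basisFun ℝ (Fin n × Fin m)).span_eq]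
    rw [Submodule.span_le]
    rintro w ⟨q, rfl⟩
    obtain ⟨i, j⟩ := q
    have hcne : eval (P i j) (F i j) ≠ 0 := hFself i j
    have hFmem : (eval (P i j) (F i j))⁻¹ • F i j ∈ A D :=
      Submodule.smul_mem _ _ ((hmemA _ _).mpr (hFdeg i j))
    rw [SetLike.mem_coe, LinearMap.mem_range]
    refine ⟨⟨(eval (P i j) (F i j))⁻¹ • F i j, hFmem⟩, ?_⟩
    funext q'
    obtain ⟨k, l⟩ := q'
    simp only [hE', hE, LinearMap.comp_apply, Submodule.coe_subtype, LinearMap.pi_apply,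
      evalLM_apply, Pi.basisFun_apply]
    rw [smul_eval]
    rcases Decidable.eq_or_ne ((k, l) : Fin n × Fin m) (i, j) with heq | hne
    · injection heq with hk hl
      subst hk; subst hl
      rw [Pi.single_apply, if_pos rfl]
      field_simp
    · rw [hFother i j k l hne, Pi.single_apply, if_neg ?_]
      · ring
      · exact fun hctr => hne (by rw [hctr])
  -- rank computations
  haveI hAfin : ∀ k : ℕ, Module.Finite ℝ (A k) := fun k => by
    rw [hA]; infer_instance
  have frA : ∀ k : ℕ, Module.finrank ℝ (A k) = (TT k).card := fun k =>
    finrank_restrictTotalDegree k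
  have frI₁ : Module.finrank ℝ I₁ = (TT (D - d₁)).card := by
    rw [hI₁, ← frA]
    exact (LinearEquiv.finrank_eq (Submodule.equivMapOfInjective _ hM₁inj _)).symm
  have frI₂ : Module.finrank ℝ I₂ = (TT (D - d₂)).card := by
    rw [hI₂, ← frA]
    exact (LinearEquiv.finrank_eq (Submodule.equivMapOfInjective _ hM₂inj _)).symm
  haveI : Module.Finite ℝ I₁ := by rw [hI₁]; infer_instance
  haveI : Module.Finite ℝ I₂ := by rw [hI₂]; infer_instance
  have frInf : Module.finrank ℝ ↥(I₁ ⊓ I₂) ≤ (TT (D - d₁ - d₂)).card := by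
    refine le_trans (Submodule.finrank_mono hsyz) ?_
    rw [← frA (D - d₁ - d₂)]
    refine le_of_eq (LinearEquiv.finrank_eq (Submodule.equivMapOfInjective _
      (fun x y hxy => ?_) _)).symm
    rw [LinearMap.mulLeft_apply, LinearMap.mulLeft_apply] at hxy
    exact mul_left_cancel₀ (mul_ne_zero h₁ h₂) hxy
  have frK : Module.finrank ℝ ↥(LinearMap.ker E') + n * m = (TT D).card := by
    have hrn := LinearMap.finrank_range_add_finrank_ker E'
    rw [LinearMap.range_eq_top.mpr hsurj] at hrn
    rw [← frA D, ← hrn, finrank_top]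
    have hpi : Module.finrank ℝ ((Fin n × Fin m) → ℝ) = n * m := by
      rw [Module.finrank_pi]
      simp
    omega
  -- I₁ ⊔ I₂ is inside the kernel
  have hsupker : Module.finrank ℝ ↥(I₁ ⊔ I₂) ≤ Module.finrank ℝ ↥(LinearMap.ker E') := by
    have hle : I₁ ⊔ I₂ ≤ A D := sup_le hI₁le hI₂le
    have hcomap : Module.finrank ℝ ↥((I₁ ⊔ I₂).comap (A D).subtype) =
        Module.finrank ℝ ↥(I₁ ⊔ I₂) :=
      LinearEquiv.finrank_eq (Submodule.comapSubtypeEquivOfLe hle)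
    rw [← hcomap]
    refine Submodule.finrank_mono ?_
    rintro ⟨x, hxA⟩ hx
    rw [Submodule.mem_comap] at hx
    simp only [Submodule.coe_subtype] at hx
    rw [LinearMap.mem_ker]
    obtain ⟨y, hy, z, hz, hyz⟩ := Submodule.mem_sup.mp hx
    funext q
    obtain ⟨k, l⟩ := q
    simp only [hE', hE, LinearMap.comp_apply, Submodule.coe_subtype, LinearMap.pi_apply,
      evalLM_apply, Pi.zero_apply]
    obtain ⟨y', hy', rfl⟩ := hy
    obtain ⟨z', hz', rfl⟩ := hz
    rw [← hyz]
    simp only [LinearMap.mulLeft_apply, map_add, _root_.map_mul]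
    rw [hz1 k (hPmem k l), hz2 k (hPmem k l)]
    ring
  -- put everything together
  have hsum := Submodule.finrank_sup_add_finrank_inf_eq I₁ I₂
  have hshell := shell_card_bound hd₁ hd₂ hdD
  have hfinal : n * m ≤ d₁ * d₂ * (D + 1) := by linarith
  have hcontr : n * m = d₁ * d₂ * (D + 1) + 1 := by rw [hn, hm, hD]; ring
  omega
lemma deg0_eq_C {p : MvPolynomial (Fin 3) ℝ} (h : p.totalDegree = 0) :
    p = C (coeff 0 p) := by
  rw [totalDegree_eq_zero_iff] at h
  ext d
  rw [coeff_C]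
  split_ifs with hd
  · rw [← hd]
  · by_contra hne
    exact hd (Finsupp.ext fun i => (h d (mem_support_iff.mpr hne) i).symm)

/-- If `p₁, p₂ ∈ ℝ[x,y,z]` are nonzero with no common irreducible factor,
then at most `deg p₁ · deg p₂` lines are simultaneously contained in both zero sets. -/
theorem common_lines_le_prod_deg (p₁ p₂ : MvPolynomial (Fin 3) ℝ)
    (h₁ : p₁ ≠ 0) (h₂ : p₂ ≠ 0)
    (hcop : ∀ q : MvPolynomial (Fin 3) ℝ, Irreducible q → q ∣ p₁ → ¬ q ∣ p₂) :
    {l : Set (Fin 3 → ℝ) | IsLine l ∧ l ⊆ {x | eval x p₁ = 0} ∧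
        l ⊆ {x | eval x p₂ = 0}}.Finite ∧
      {l : Set (Fin 3 → ℝ) | IsLine l ∧ l ⊆ {x | eval x p₁ = 0} ∧
        l ⊆ {x | eval x p₂ = 0}}.ncard ≤ p₁.totalDegree * p₂.totalDegree := by
  classical
  set S := {l : Set (Fin 3 → ℝ) | IsLine l ∧ l ⊆ {x | eval x p₁ = 0} ∧
      l ⊆ {x | eval x p₂ = 0}} with hS
  -- degenerate cases: a constant nonzero polynomial has empty zero set
  by_cases hd₁0 : p₁.totalDegree = 0
  · have hempty : S = ∅ := by
      rw [Set.eq_empty_iff_forall_notMem]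
      rintro l ⟨⟨a, v, hv, rfl⟩, hsub1, _⟩
      have ha : a ∈ {x : Fin 3 → ℝ | ∃ t : ℝ, x = a + t • v} := ⟨0, by simp⟩
      have := hsub1 ha
      rw [Set.mem_setOf_eq, deg0_eq_C hd₁0, eval_C] at this
      exact h₁ (by rw [deg0_eq_C hd₁0, this, map_zero])
    rw [hempty]
    simp
  by_cases hd₂0 : p₂.totalDegree = 0
  · have hempty : S = ∅ := by
      rw [Set.eq_empty_iff_forall_notMem]
      rintro l ⟨⟨a, v, hv, rfl⟩, _, hsub2⟩
      have ha : a ∈ {x : Fin 3 → ℝ | ∃ t : ℝ, x = a + t • v} := ⟨0, by simp⟩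
      have := hsub2 ha
      rw [Set.mem_setOf_eq, deg0_eq_C hd₂0, eval_C] at this
      exact h₂ (by rw [deg0_eq_C hd₂0, this, map_zero])
    rw [hempty]
    simp
  -- relative primality
  have hrp : IsRelPrime p₁ p₂ := by
    intro q hq1 hq2
    by_contra hqu
    have hq0 : q ≠ 0 := fun h => h₁ (by rw [h] at hq1; exact zero_dvd_iff.mp hq1)
    obtain ⟨r, hr, hrd⟩ := WfDvdMonoid.exists_irreducible_factor hqu hq0
    exact hcop r hr (hrd.trans hq1) (hrd.trans hq2)
  -- no subset of size d₁d₂ + 1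
  have key : ∀ T : Set (Set (Fin 3 → ℝ)), T ⊆ S → T.Finite →
      T.ncard = p₁.totalDegree * p₂.totalDegree + 1 → False := by
    intro T hTS hTfin hTcard
    haveI := hTfin.fintype
    have hcard : Fintype.card T = p₁.totalDegree * p₂.totalDegree + 1 := by
      rw [← Nat.card_eq_fintype_card, Nat.card_coe_set_eq, hTcard]
    set L : Fin (p₁.totalDegree * p₂.totalDegree + 1) → Set (Fin 3 → ℝ) :=
      fun i => ((Fintype.equivFinOfCardEq hcard).symm i : T) with hL
    have hLinj : Function.Injective L :=
      Subtype.val_injective.comp (Equiv.injective _)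
    have hLS : ∀ i, L i ∈ S := fun i =>
      hTS ((Fintype.equivFinOfCardEq hcard).symm i).2
    exact master p₁.totalDegree p₂.totalDegree _ ((p₁.totalDegree * p₂.totalDegree) ^ 2 + 1)
      (p₁.totalDegree * p₂.totalDegree + (p₁.totalDegree * p₂.totalDegree) ^ 2)
      h₁ h₂ hrp rfl rfl (Nat.pos_of_ne_zero hd₁0) (Nat.pos_of_ne_zero hd₂0) rfl rfl rfl
      L hLinj (fun i => (hLS i).1) (fun i => (hLS i).2.1) (fun i => (hLS i).2.2)
  have hfin : S.Finite := by
    by_contra hinf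
    have hinf' : S.Infinite := hinf
    obtain ⟨T, hTS, hTfin, hTcard⟩ :=
      hinf'.exists_subset_ncard_eq (p₁.totalDegree * p₂.totalDegree + 1)
    exact key T hTS hTfin hTcard
  refine ⟨hfin, ?_⟩
  by_contra hgt
  push_neg at hgt
  obtain ⟨T, hTS, hTcard⟩ := Set.exists_subset_card_eq
    (show p₁.totalDegree * p₂.totalDegree + 1 ≤ S.ncard from hgt)
  exact key T hTS (Set.finite_of_ncard_ne_zero (by omega)) hTcard
end

section
/- Suppose that for all finite collections L₁, L₂, L₃ of lines in ℝ³, the number of multijoints satisfies |J(L₁,L₂,L₃)| ≤ C·(|L₁||L₂||L₃|)^{1/2}. Fix finite collections L₁, L₂, L₃ and positive integers N₁, N₂, N₃, and let J_{N₁,N₂,N₃} be the set of points x such that for each i there is a subcollection Lᵢ(x) ⊆ Lᵢ of at least Nᵢ lines through x, with the three subcollections transversal (any choice of one line from each has directions spanning ℝ³). Then |J_{N₁,N₂,N₃}(L₁,L₂,L₃)| ≤ C'·(|L₁||L₂||L₃|)^{1/2}/(N₁N₂N₃)^{1/2} for an absolute constant C' depending only on C. -/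
open scoped Classical

/-- A line in `ℝ³`, given by a base point and a nonzero direction vector. -/
structure Line3 where
  pt : Fin 3 → ℝ
  dir : Fin 3 → ℝ
  dir_ne : dir ≠ 0

/-- The set of points of a line. -/
def Line3.carrier (l : Line3) : Set (Fin 3 → ℝ) := {x | ∃ t : ℝ, x = l.pt + t • l.dir}

/-- Three lines whose directions span `ℝ³`. -/
def Spans (l₁ l₂ l₃ : Line3) : Prop :=
  Submodule.span ℝ ({l₁.dir, l₂.dir, l₃.dir} : Set (Fin 3 → ℝ)) = ⊤

/-- The set of multijoints formed by three collections of lines: points lying on a line of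
each collection, the three directions spanning `ℝ³`. -/
def multijointSet (L₁ L₂ L₃ : Finset Line3) : Set (Fin 3 → ℝ) :=
  {x | ∃ l₁ ∈ L₁, ∃ l₂ ∈ L₂, ∃ l₃ ∈ L₃,
    x ∈ l₁.carrier ∧ x ∈ l₂.carrier ∧ x ∈ l₃.carrier ∧ Spans l₁ l₂ l₃}

/-- The set of multijoints with multiplicities at least `N₁, N₂, N₃`: points admitting
transversal subcollections `Sᵢ ⊆ Lᵢ` of lines through the point with `|Sᵢ| ≥ Nᵢ`. -/
def multijointSetN (L₁ L₂ L₃ : Finset Line3) (N₁ N₂ N₃ : ℕ) : Set (Fin 3 → ℝ) :=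
  {x | ∃ S₁ S₂ S₃ : Finset Line3, S₁ ⊆ L₁ ∧ S₂ ⊆ L₂ ∧ S₃ ⊆ L₃ ∧
    N₁ ≤ S₁.card ∧ N₂ ≤ S₂.card ∧ N₃ ≤ S₃.card ∧
    (∀ l ∈ S₁, x ∈ l.carrier) ∧ (∀ l ∈ S₂, x ∈ l.carrier) ∧ (∀ l ∈ S₃, x ∈ l.carrier) ∧
    ∀ l₁ ∈ S₁, ∀ l₂ ∈ S₂, ∀ l₃ ∈ S₃, Spans l₁ l₂ l₃}

open Finset

lemma carrier_inter_subsing (l₁ l₂ : Line3) (h : ¬ ∃ c : ℝ, l₂.dir = c • l₁.dir) :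
    ({x | x ∈ l₁.carrier ∧ x ∈ l₂.carrier} : Set (Fin 3 → ℝ)).Subsingleton := by
  rintro x ⟨⟨t, hx1⟩, ⟨s, hx2⟩⟩ y ⟨⟨t', hy1⟩, ⟨s', hy2⟩⟩
  by_contra hxy
  have h1 : (t - t') • l₁.dir = (s - s') • l₂.dir := by
    have e1 : x - y = (t - t') • l₁.dir := by rw [hx1, hy1, sub_smul]; abel
    have e2 : x - y = (s - s') • l₂.dir := by rw [hx2, hy2, sub_smul]; abel
    rw [← e1, e2]
  have hss : s ≠ s' := by
    rintro rfl
    simp only [sub_self, zero_smul] at h1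
    rcases sub_eq_zero.mp (by
      rcases smul_eq_zero.mp h1 with h | h
      · exact h
      · exact absurd h l₁.dir_ne) with rfl
    exact hxy (by rw [hx1, hy1])
  apply h
  refine ⟨(t - t') / (s - s'), ?_⟩
  have : l₂.dir = (s - s')⁻¹ • ((s - s') • l₂.dir) := by
    rw [smul_smul, inv_mul_cancel₀ (sub_ne_zero.mpr hss), one_smul]
  rw [this, ← h1, smul_smul, div_eq_inv_mul]

lemma Spans.not_par {l₁ l₂ l₃ : Line3} (h : Spans l₁ l₂ l₃) : ¬ ∃ c : ℝ, l₂.dir = c • l₁.dir := by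
  rintro ⟨c, hc⟩
  have hsub : ({l₁.dir, l₂.dir, l₃.dir} : Set (Fin 3 → ℝ)) ⊆
      ↑(Submodule.span ℝ ({l₁.dir, l₃.dir} : Set (Fin 3 → ℝ))) := by
    rintro v hv
    simp only [Set.mem_insert_iff, Set.mem_singleton_iff] at hv
    have m1 : l₁.dir ∈ Submodule.span ℝ ({l₁.dir, l₃.dir} : Set (Fin 3 → ℝ)) :=
      Submodule.subset_span (Set.mem_insert _ _)
    have m3 : l₃.dir ∈ Submodule.span ℝ ({l₁.dir, l₃.dir} : Set (Fin 3 → ℝ)) :=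
      Submodule.subset_span (Set.mem_insert_of_mem _ rfl)
    rcases hv with rfl | rfl | rfl
    · exact m1
    · rw [hc]; exact Submodule.smul_mem _ _ m1
    · exact m3
  have htop : Submodule.span ℝ ({l₁.dir, l₃.dir} : Set (Fin 3 → ℝ)) = ⊤ := by
    refine le_antisymm le_top ?_
    rw [← h]
    exact Submodule.span_le.mpr hsub
  have h2 : Set.finrank ℝ ({l₁.dir, l₃.dir} : Set (Fin 3 → ℝ)) ≤ 2 := by
    have hfr := finrank_span_finset_le_card (R := ℝ) ({l₁.dir, l₃.dir} : Finset (Fin 3 → ℝ))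
    have hcoe : (↑({l₁.dir, l₃.dir} : Finset (Fin 3 → ℝ)) : Set (Fin 3 → ℝ))
        = {l₁.dir, l₃.dir} := by simp
    rw [hcoe] at hfr
    exact hfr.trans ((Finset.card_insert_le _ _).trans (by simp))
  unfold Set.finrank at h2
  rw [htop, finrank_top] at h2
  have : Module.finrank ℝ (Fin 3 → ℝ) = 3 := by simp
  omega

lemma multijointSet_finite (L₁ L₂ L₃ : Finset Line3) : (multijointSet L₁ L₂ L₃).Finite := by
  have hsub : multijointSet L₁ L₂ L₃ ⊆ ⋃ p ∈ (↑(L₁ ×ˢ L₂) : Set (Line3 × Line3)),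
      {x | (x ∈ p.1.carrier ∧ x ∈ p.2.carrier) ∧ ¬ ∃ c : ℝ, p.2.dir = c • p.1.dir} := by
    rintro x ⟨l₁, h₁, l₂, h₂, l₃, h₃, hc₁, hc₂, hc₃, hsp⟩
    exact Set.mem_biUnion (show ((l₁, l₂) : Line3 × Line3) ∈ _ by simp [h₁, h₂])
      ⟨⟨hc₁, hc₂⟩, hsp.not_par⟩
  refine Set.Finite.subset (Set.Finite.biUnion (Finset.finite_toSet _) ?_) hsub
  rintro p -
  refine Set.Subsingleton.finite ?_
  rintro x ⟨hx, hPx⟩ y ⟨hy, hPy⟩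
  exact carrier_inter_subsing p.1 p.2 hPx hx hy

lemma count_pi {ι : Type*} [Fintype ι] {N : ℕ} (T : Finset ι) (A : Finset (Fin N)) :
    (univ.filter fun f : ι → Fin N => ∀ i ∈ T, f i ∈ A).card
      = A.card ^ T.card * N ^ (Fintype.card ι - T.card) := by
  classical
  have hpi : (univ.filter fun f : ι → Fin N => ∀ i ∈ T, f i ∈ A)
      = Fintype.piFinset (fun i => if i ∈ T then A else univ) := by
    ext f
    simp only [mem_filter, mem_univ, true_and, Fintype.mem_piFinset]
    constructor
    · intro h i
      by_cases hi : i ∈ T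
      · simpa [hi] using h i hi
      · simp [hi]
    · intro h i hi
      simpa [hi] using h i
  rw [hpi, Fintype.card_piFinset]
  have : ∀ i : ι, (if i ∈ T then A else univ).card = if i ∈ T then A.card else N := by
    intro i; split <;> simp
  simp_rw [this]
  rw [Finset.prod_ite _ _, Finset.prod_const, Finset.prod_const]
  congr 2
  · simp
  · rw [← Finset.card_compl]
    congr 1
    ext i; simp
lemma count_avoid {ι : Type*} [Fintype ι] {N : ℕ} [NeZero N] (T : Finset ι) :
    (univ.filter fun f : ι → Fin N => ∀ i ∈ T, f i ≠ 0).card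
      = (N - 1) ^ T.card * N ^ (Fintype.card ι - T.card) := by
  have h := count_pi T (Finset.univ.erase (0 : Fin N))
  have h1 : (Finset.univ.erase (0 : Fin N)).card = N - 1 := by
    rw [Finset.card_erase_of_mem (mem_univ _), card_univ, Fintype.card_fin]
  rw [h1] at h
  rw [← h]
  congr 1
  ext f
  simp [Finset.mem_erase]

lemma count_zero {ι : Type*} [Fintype ι] {N : ℕ} [NeZero N] (i₀ : ι) :
    (univ.filter fun f : ι → Fin N => f i₀ = 0).card = N ^ (Fintype.card ι - 1) := by
  have h := count_pi {i₀} ({0} : Finset (Fin N))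
  simpa using h

lemma exp_neg_one_le_half : Real.exp (-1) ≤ 1/2 := by
  have h2 : (2:ℝ) ≤ Real.exp 1 := by have := Real.add_one_le_exp 1; linarith
  rw [Real.exp_neg]
  have h := inv_anti₀ (by norm_num : (0:ℝ) < 2) h2
  linarith

lemma survival {ι : Type*} [Fintype ι] {N : ℕ} [NeZero N] (T : Finset ι) (hT : N ≤ T.card) :
    (N : ℝ) ^ Fintype.card ι
      ≤ 2 * ((univ.filter fun f : ι → Fin N => ∃ i ∈ T, f i = 0).card : ℝ) := by
  have hN : 0 < N := Nat.pos_of_ne_zero (NeZero.ne N)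
  have hsplit : (univ.filter fun f : ι → Fin N => ∃ i ∈ T, f i = 0).card
      + (univ.filter fun f : ι → Fin N => ∀ i ∈ T, f i ≠ 0).card
      = N ^ Fintype.card ι := by
    have h := Finset.card_filter_add_card_filter_not
      (s := (univ : Finset (ι → Fin N))) (p := fun f => ∃ i ∈ T, f i = 0)
    rw [card_univ, Fintype.card_fun, Fintype.card_fin] at h
    rw [← h]
    congr 2
    ext f
    push_neg
    rfl
  have hTc : T.card ≤ Fintype.card ι := Finset.card_le_univ T
  have hNR : (0:ℝ) < N := by exact_mod_cast hN
  have hN1 : (1:ℝ) ≤ N := by exact_mod_cast hN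
  -- the ratio bound
  have hratio : ((N:ℝ) - 1) / N ≤ Real.exp (-(1/N)) := by
    have h := Real.add_one_le_exp (-(1/N : ℝ))
    have heq : ((N:ℝ) - 1)/N = -(1/(N:ℝ)) + 1 := by field_simp; ring
    linarith
  have hr0 : (0:ℝ) ≤ ((N:ℝ) - 1)/N := div_nonneg (by linarith) hNR.le
  have hpow : (((N:ℝ) - 1)/N) ^ T.card ≤ Real.exp (-(1/N)) ^ T.card :=
    pow_le_pow_left₀ hr0 hratio _
  have hpow2 : Real.exp (-(1/N)) ^ T.card ≤ Real.exp (-(1/N)) ^ N := by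
    apply pow_le_pow_of_le_one (Real.exp_pos _).le _ hT
    rw [Real.exp_le_one_iff]
    have : (0:ℝ) < 1/N := by positivity
    linarith
  have hpow3 : Real.exp (-(1/N)) ^ N = Real.exp (-1) := by
    rw [← Real.exp_nat_mul]
    congr 1
    field_simp
  have hhalf : (((N:ℝ) - 1)/N) ^ T.card ≤ 1/2 :=
    (hpow.trans (hpow2.trans_eq hpow3)).trans exp_neg_one_le_half
  -- real bound on the bad count
  have hbad : (((univ.filter fun f : ι → Fin N => ∀ i ∈ T, f i ≠ 0).card : ℝ))
      ≤ (1/2) * (N : ℝ) ^ Fintype.card ι := by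
    rw [count_avoid T]
    have hc1 : ((N - 1 : ℕ) : ℝ) = (N:ℝ) - 1 := by
      have h1 : (1:ℕ) ≤ N := hN
      rw [Nat.cast_sub h1, Nat.cast_one]
    push_cast
    rw [hc1]
    have hexp : ((N:ℝ) - 1) ^ T.card = (((N:ℝ) - 1)/N) ^ T.card * (N:ℝ) ^ T.card := by
      rw [div_pow, div_mul_cancel₀ _ (pow_ne_zero _ hNR.ne')]
    have hjoin : (N:ℝ) ^ T.card * (N:ℝ) ^ (Fintype.card ι - T.card)
        = (N:ℝ) ^ Fintype.card ι := by
      rw [← pow_add, Nat.add_sub_cancel' hTc]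
    have hNp : (0:ℝ) ≤ (N:ℝ) ^ T.card * (N:ℝ) ^ (Fintype.card ι - T.card) := by positivity
    calc ((N:ℝ) - 1) ^ T.card * (N:ℝ) ^ (Fintype.card ι - T.card)
        = (((N:ℝ) - 1)/N) ^ T.card * ((N:ℝ) ^ T.card * (N:ℝ) ^ (Fintype.card ι - T.card)) := by
          rw [hexp]; ring
      _ ≤ (1/2) * ((N:ℝ) ^ T.card * (N:ℝ) ^ (Fintype.card ι - T.card)) :=
          mul_le_mul_of_nonneg_right hhalf hNp
      _ = (1/2) * (N:ℝ) ^ Fintype.card ι := by rw [hjoin]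
  have hcast : ((univ.filter fun f : ι → Fin N => ∃ i ∈ T, f i = 0).card : ℝ)
      + ((univ.filter fun f : ι → Fin N => ∀ i ∈ T, f i ≠ 0).card : ℝ)
      = (N:ℝ) ^ Fintype.card ι := by
    exact_mod_cast congrArg (Nat.cast : ℕ → ℝ) hsplit
  linarith

lemma survival' {ι : Type*} [Fintype ι] {N : ℕ} [NeZero N] (T : Finset ι) (hT : N ≤ T.card)
    (E : Finset (ι → Fin N)) (hE : ∀ f : ι → Fin N, (∃ i ∈ T, f i = 0) → f ∈ E) :
    (N : ℝ) ^ Fintype.card ι ≤ 2 * (E.card : ℝ) := by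
  refine (survival T hT).trans ?_
  have hsub : (univ.filter fun f : ι → Fin N => ∃ i ∈ T, f i = 0) ⊆ E := by
    intro f hf
    exact hE f (Finset.mem_filter.mp hf).2
  have h1 := Finset.card_le_card hsub
  have h2 : ((univ.filter fun f : ι → Fin N => ∃ i ∈ T, f i = 0).card : ℝ) ≤ (E.card : ℝ) := by
    exact_mod_cast h1
  linarith

noncomputable def mjSample (L : Finset Line3) {N : ℕ} [NeZero N] (f : {l // l ∈ L} → Fin N) :
    Finset Line3 :=
  (univ.filter fun i => f i = 0).map ⟨Subtype.val, Subtype.val_injective⟩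

lemma mem_mjSample {L : Finset Line3} {N : ℕ} [NeZero N] {f : {l // l ∈ L} → Fin N} {l : Line3} :
    l ∈ mjSample L f ↔ ∃ h : l ∈ L, f ⟨l, h⟩ = 0 := by
  simp only [mjSample, Finset.mem_map, Finset.mem_filter, mem_univ, true_and,
    Function.Embedding.coeFn_mk]
  constructor
  · rintro ⟨i, hi, rfl⟩
    exact ⟨i.2, hi⟩
  · rintro ⟨h, hf⟩
    exact ⟨⟨l, h⟩, hf, rfl⟩

lemma card_mjSample {L : Finset Line3} {N : ℕ} [NeZero N] (f : {l // l ∈ L} → Fin N) :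
    (mjSample L f).card = (univ.filter fun i : {l // l ∈ L} => f i = 0).card :=
  Finset.card_map _

lemma sum_card_mjSample (L : Finset Line3) {N : ℕ} [NeZero N] :
    ∑ f : {l // l ∈ L} → Fin N, (mjSample L f).card = L.card * N ^ (L.card - 1) := by
  have h1 : ∀ f : {l // l ∈ L} → Fin N, (mjSample L f).card
      = ∑ i : {l // l ∈ L}, if f i = 0 then 1 else 0 := by
    intro f
    rw [card_mjSample, Finset.card_filter]
  simp_rw [h1]
  rw [Finset.sum_comm]
  have h2 : ∀ i : {l // l ∈ L}, (∑ f : {l // l ∈ L} → Fin N, if f i = 0 then 1 else 0)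
      = N ^ (L.card - 1) := by
    intro i
    rw [← Finset.card_filter]
    have h := count_zero (ι := {l // l ∈ L}) (N := N) i
    rw [Fintype.card_coe] at h
    convert h using 2
    ext g
    simp
  simp_rw [h2]
  rw [Finset.sum_const, card_univ, Fintype.card_coe, smul_eq_mul]

lemma sum_sqrt_card_mjSample (L : Finset Line3) {N : ℕ} [NeZero N] :
    ∑ f : {l // l ∈ L} → Fin N, Real.sqrt ((mjSample L f).card)
      ≤ (N:ℝ) ^ L.card * Real.sqrt ((L.card : ℝ) / N) := by
  have hN : 0 < N := Nat.pos_of_ne_zero (NeZero.ne N)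
  have hNR : (0:ℝ) < N := by exact_mod_cast hN
  rcases Nat.eq_zero_or_pos L.card with hL | hL
  · have hempty : ∀ f : {l // l ∈ L} → Fin N, (mjSample L f).card = 0 := by
      intro f
      have := (card_mjSample f).trans_le (Finset.card_le_univ _)
      rw [Fintype.card_coe, hL] at this
      omega
    simp only [hempty, Nat.cast_zero, Real.sqrt_zero]
    rw [Finset.sum_const, smul_zero]
    positivity
  -- Cauchy–Schwarz
  have hcs := sq_sum_le_card_mul_sum_sq (s := (univ : Finset ({l // l ∈ L} → Fin N)))
    (f := fun f => Real.sqrt ((mjSample L f).card))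
  have hsq : ∀ f : {l // l ∈ L} → Fin N,
      Real.sqrt ((mjSample L f).card) ^ 2 = ((mjSample L f).card : ℝ) := fun f =>
    Real.sq_sqrt (Nat.cast_nonneg _)
  simp_rw [hsq] at hcs
  have hcard : ((univ : Finset ({l // l ∈ L} → Fin N)).card : ℝ) = (N:ℝ) ^ L.card := by
    rw [card_univ, Fintype.card_fun, Fintype.card_fin, Fintype.card_coe]
    push_cast
    rfl
  have hsum : (∑ f : {l // l ∈ L} → Fin N, ((mjSample L f).card : ℝ))
      = (L.card : ℝ) * (N:ℝ) ^ (L.card - 1) := by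
    rw [← Nat.cast_sum]
    rw [sum_card_mjSample L]
    push_cast
    rfl
  rw [hcard, hsum] at hcs
  have hnn : 0 ≤ ∑ f : {l // l ∈ L} → Fin N, Real.sqrt ((mjSample L f).card) :=
    Finset.sum_nonneg fun f _ => Real.sqrt_nonneg _
  have hrhs : ((N:ℝ) ^ L.card * Real.sqrt ((L.card : ℝ) / N)) ^ 2
      = (N:ℝ) ^ L.card * ((L.card : ℝ) * (N:ℝ) ^ (L.card - 1)) := by
    rw [mul_pow, Real.sq_sqrt (by positivity : (0:ℝ) ≤ (L.card : ℝ) / N)]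
    have hstep : (N:ℝ) ^ L.card = (N:ℝ) ^ (L.card - 1) * N := by
      rw [← pow_succ]
      congr 1
      omega
    rw [hstep]
    field_simp
  have hrhs0 : 0 ≤ (N:ℝ) ^ L.card * Real.sqrt ((L.card : ℝ) / N) := by positivity
  nlinarith [hcs, hnn, hrhs0]

lemma multijointSetN_subset {L₁ L₂ L₃ : Finset Line3} {N₁ N₂ N₃ : ℕ}
    (h₁ : 0 < N₁) (h₂ : 0 < N₂) (h₃ : 0 < N₃) :
    multijointSetN L₁ L₂ L₃ N₁ N₂ N₃ ⊆ multijointSet L₁ L₂ L₃ := by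
  rintro x ⟨S₁, S₂, S₃, hs₁, hs₂, hs₃, hc₁, hc₂, hc₃, hm₁, hm₂, hm₃, hsp⟩
  obtain ⟨l₁, hl₁⟩ := Finset.card_pos.mp (lt_of_lt_of_le h₁ hc₁)
  obtain ⟨l₂, hl₂⟩ := Finset.card_pos.mp (lt_of_lt_of_le h₂ hc₂)
  obtain ⟨l₃, hl₃⟩ := Finset.card_pos.mp (lt_of_lt_of_le h₃ hc₃)
  exact ⟨l₁, hs₁ hl₁, l₂, hs₂ hl₂, l₃, hs₃ hl₃, hm₁ _ hl₁, hm₂ _ hl₂, hm₃ _ hl₃,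
    hsp _ hl₁ _ hl₂ _ hl₃⟩

lemma card_filter_sub {L S : Finset Line3} (hS : S ⊆ L) :
    (Finset.univ.filter fun i : {l // l ∈ L} => i.1 ∈ S).card = S.card := by
  apply Finset.card_bij (fun i _ => i.1)
  · intro i hi
    exact (Finset.mem_filter.mp hi).2
  · intro i₁ _ i₂ _ h
    exact Subtype.ext h
  · intro l hl
    exact ⟨⟨l, hS hl⟩, Finset.mem_filter.mpr ⟨Finset.mem_univ _, hl⟩, rfl⟩

set_option maxHeartbeats 2000000 in
/-- If the multijoints bound `|J(L₁,L₂,L₃)| ≤ C·(|L₁||L₂||L₃|)^{1/2}` holds for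
all finite collections of lines in `ℝ³`, then for all collections and positive integers
`N₁, N₂, N₃`, `|J_{N₁,N₂,N₃}(L₁,L₂,L₃)| ≤ C'·(|L₁||L₂||L₃|)^{1/2}/(N₁N₂N₃)^{1/2}` for a
constant `C'` depending only on `C`. -/
theorem multijoint_multiplicity_of_plain (C : ℝ)
    (hC : ∀ L₁ L₂ L₃ : Finset Line3,
      ((multijointSet L₁ L₂ L₃).ncard : ℝ) ≤
        C * Real.sqrt ((L₁.card : ℝ) * L₂.card * L₃.card)) :
    ∃ C' : ℝ, 0 < C' ∧ ∀ (L₁ L₂ L₃ : Finset Line3) (N₁ N₂ N₃ : ℕ),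
      0 < N₁ → 0 < N₂ → 0 < N₃ →
      ((multijointSetN L₁ L₂ L₃ N₁ N₂ N₃).ncard : ℝ) ≤
        C' * Real.sqrt ((L₁.card : ℝ) * L₂.card * L₃.card) /
          Real.sqrt ((N₁ : ℝ) * N₂ * N₃) := by
  have hC0 : 0 ≤ C := by
    have hl0 : (fun _ : Fin 3 => (1:ℝ)) ≠ 0 := by
      intro h
      exact one_ne_zero (congrFun h 0)
    set l0 : Line3 := ⟨0, fun _ => 1, hl0⟩ with hl0def
    have h := hC {l0} {l0} {l0}
    simp only [Finset.card_singleton, Nat.cast_one, mul_one, one_mul, Real.sqrt_one] at h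
    have h0 : (0:ℝ) ≤ ((multijointSet {l0} {l0} {l0}).ncard : ℝ) := Nat.cast_nonneg _
    linarith
  refine ⟨8 * C + 1, by linarith, ?_⟩
  intro L₁ L₂ L₃ N₁ N₂ N₃ hN₁ hN₂ hN₃
  haveI : NeZero N₁ := ⟨hN₁.ne'⟩
  haveI : NeZero N₂ := ⟨hN₂.ne'⟩
  haveI : NeZero N₃ := ⟨hN₃.ne'⟩
  have hJfin : (multijointSetN L₁ L₂ L₃ N₁ N₂ N₃).Finite :=
    (multijointSet_finite L₁ L₂ L₃).subset (multijointSetN_subset hN₁ hN₂ hN₃)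
  set J : Finset (Fin 3 → ℝ) := hJfin.toFinset with hJdef
  have hncard : ((multijointSetN L₁ L₂ L₃ N₁ N₂ N₃).ncard : ℝ) = (J.card : ℝ) := by
    rw [Set.ncard_eq_toFinset_card _ hJfin]
  rw [hncard]
  -- the probability space
  set p : (Fin 3 → ℝ) → ((({l // l ∈ L₁} → Fin N₁) × ({l // l ∈ L₂} → Fin N₂) ×
      ({l // l ∈ L₃} → Fin N₃))) → Prop :=
    fun x ω => x ∈ multijointSet (mjSample L₁ ω.1) (mjSample L₂ ω.2.1) (mjSample L₃ ω.2.2)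
    with hpdef
  set M : ℝ := (N₁:ℝ) ^ L₁.card * ((N₂:ℝ) ^ L₂.card * (N₃:ℝ) ^ L₃.card) with hMdef
  have hM0 : 0 < M := by positivity
  -- swap the double count
  have hswap : ∑ ω : (({l // l ∈ L₁} → Fin N₁) × ({l // l ∈ L₂} → Fin N₂) ×
        ({l // l ∈ L₃} → Fin N₃)), (J.filter fun x => p x ω).card
      = ∑ x ∈ J, (Finset.univ.filter fun ω : (({l // l ∈ L₁} → Fin N₁) ×
        ({l // l ∈ L₂} → Fin N₂) × ({l // l ∈ L₃} → Fin N₃)) => p x ω).card := by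
    simp_rw [Finset.card_filter]
    rw [Finset.sum_comm]
  -- per point lower bound
  have hpoint : ∀ x ∈ J, M ≤ 8 * ((Finset.univ.filter fun ω : (({l // l ∈ L₁} → Fin N₁) ×
      ({l // l ∈ L₂} → Fin N₂) × ({l // l ∈ L₃} → Fin N₃)) => p x ω).card : ℝ) := by
    intro x hx
    have hxJ : x ∈ multijointSetN L₁ L₂ L₃ N₁ N₂ N₃ := hJfin.mem_toFinset.mp hx
    obtain ⟨S₁, S₂, S₃, hs₁, hs₂, hs₃, hc₁, hc₂, hc₃, hm₁, hm₂, hm₃, hsp⟩ := hxJ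
    set T₁ : Finset {l // l ∈ L₁} := Finset.univ.filter (fun i => i.1 ∈ S₁) with hT₁def
    set T₂ : Finset {l // l ∈ L₂} := Finset.univ.filter (fun i => i.1 ∈ S₂) with hT₂def
    set T₃ : Finset {l // l ∈ L₃} := Finset.univ.filter (fun i => i.1 ∈ S₃) with hT₃def
    have hT₁ : N₁ ≤ T₁.card := by rw [hT₁def, card_filter_sub hs₁]; exact hc₁
    have hT₂ : N₂ ≤ T₂.card := by rw [hT₂def, card_filter_sub hs₂]; exact hc₂
    have hT₃ : N₃ ≤ T₃.card := by rw [hT₃def, card_filter_sub hs₃]; exact hc₃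
    set e₁ := Finset.univ.filter fun f : {l // l ∈ L₁} → Fin N₁ => ∃ i ∈ T₁, f i = 0 with he₁
    set e₂ := Finset.univ.filter fun f : {l // l ∈ L₂} → Fin N₂ => ∃ i ∈ T₂, f i = 0 with he₂
    set e₃ := Finset.univ.filter fun f : {l // l ∈ L₃} → Fin N₃ => ∃ i ∈ T₃, f i = 0 with he₃
    have hsv₁' : (N₁:ℝ) ^ L₁.card ≤ 2 * (e₁.card : ℝ) := by
      have h := survival' T₁ hT₁ e₁ (fun f hf => by
        rw [he₁, Finset.mem_filter]; exact ⟨Finset.mem_univ _, hf⟩)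
      rwa [Fintype.card_coe] at h
    have hsv₂' : (N₂:ℝ) ^ L₂.card ≤ 2 * (e₂.card : ℝ) := by
      have h := survival' T₂ hT₂ e₂ (fun f hf => by
        rw [he₂, Finset.mem_filter]; exact ⟨Finset.mem_univ _, hf⟩)
      rwa [Fintype.card_coe] at h
    have hsv₃' : (N₃:ℝ) ^ L₃.card ≤ 2 * (e₃.card : ℝ) := by
      have h := survival' T₃ hT₃ e₃ (fun f hf => by
        rw [he₃, Finset.mem_filter]; exact ⟨Finset.mem_univ _, hf⟩)
      rwa [Fintype.card_coe] at h
    have hev : (Finset.univ.filter fun ω : (({l // l ∈ L₁} → Fin N₁) ×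
        ({l // l ∈ L₂} → Fin N₂) × ({l // l ∈ L₃} → Fin N₃)) =>
          (∃ i ∈ T₁, ω.1 i = 0) ∧ (∃ i ∈ T₂, ω.2.1 i = 0) ∧ (∃ i ∈ T₃, ω.2.2 i = 0))
        = e₁ ×ˢ (e₂ ×ˢ e₃) := by
      ext ω
      simp only [Finset.mem_filter, Finset.mem_univ, true_and, Finset.mem_product,
        he₁, he₂, he₃]
    have hsubev : (Finset.univ.filter fun ω : (({l // l ∈ L₁} → Fin N₁) ×
        ({l // l ∈ L₂} → Fin N₂) × ({l // l ∈ L₃} → Fin N₃)) =>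
          (∃ i ∈ T₁, ω.1 i = 0) ∧ (∃ i ∈ T₂, ω.2.1 i = 0) ∧ (∃ i ∈ T₃, ω.2.2 i = 0))
        ⊆ Finset.univ.filter fun ω => p x ω := by
      intro ω hω
      rw [Finset.mem_filter] at hω ⊢
      obtain ⟨-, ⟨i₁, hi₁, h01⟩, ⟨i₂, hi₂, h02⟩, ⟨i₃, hi₃, h03⟩⟩ := hω
      refine ⟨Finset.mem_univ _, ?_⟩
      have hS₁ : i₁.1 ∈ S₁ := (Finset.mem_filter.mp hi₁).2
      have hS₂ : i₂.1 ∈ S₂ := (Finset.mem_filter.mp hi₂).2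
      have hS₃ : i₃.1 ∈ S₃ := (Finset.mem_filter.mp hi₃).2
      exact ⟨i₁.1, mem_mjSample.mpr ⟨i₁.2, h01⟩, i₂.1, mem_mjSample.mpr ⟨i₂.2, h02⟩,
        i₃.1, mem_mjSample.mpr ⟨i₃.2, h03⟩, hm₁ _ hS₁, hm₂ _ hS₂, hm₃ _ hS₃,
        hsp _ hS₁ _ hS₂ _ hS₃⟩
    have hevcard : ((Finset.univ.filter fun ω : (({l // l ∈ L₁} → Fin N₁) ×
        ({l // l ∈ L₂} → Fin N₂) × ({l // l ∈ L₃} → Fin N₃)) =>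
          (∃ i ∈ T₁, ω.1 i = 0) ∧ (∃ i ∈ T₂, ω.2.1 i = 0) ∧ (∃ i ∈ T₃, ω.2.2 i = 0)).card : ℝ)
        = (e₁.card : ℝ) * ((e₂.card : ℝ) * (e₃.card : ℝ)) := by
      rw [hev, Finset.card_product, Finset.card_product]
      push_cast
      ring
    have hprod : M ≤ 8 * ((e₁.card : ℝ) * ((e₂.card : ℝ) * (e₃.card : ℝ))) := by
      have hb₂ : (0:ℝ) ≤ 2 * (e₂.card : ℝ) :=
        mul_nonneg (by norm_num) (Nat.cast_nonneg _)
      have hc₃' : (0:ℝ) ≤ (N₃:ℝ) ^ L₃.card := pow_nonneg (Nat.cast_nonneg _) _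
      have hc₂' : (0:ℝ) ≤ (N₂:ℝ) ^ L₂.card := pow_nonneg (Nat.cast_nonneg _) _
      have h23 : (N₂:ℝ) ^ L₂.card * (N₃:ℝ) ^ L₃.card
          ≤ (2 * (e₂.card:ℝ)) * (2 * (e₃.card:ℝ)) :=
        mul_le_mul hsv₂' hsv₃' hc₃' hb₂
      have hb₁ : (0:ℝ) ≤ 2 * (e₁.card : ℝ) :=
        mul_nonneg (by norm_num) (Nat.cast_nonneg _)
      have h12 : (N₁:ℝ) ^ L₁.card * ((N₂:ℝ) ^ L₂.card * (N₃:ℝ) ^ L₃.card)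
          ≤ (2 * (e₁.card:ℝ)) * ((2 * (e₂.card:ℝ)) * (2 * (e₃.card:ℝ))) :=
        mul_le_mul hsv₁' h23 (mul_nonneg hc₂' hc₃') hb₁
      rw [hMdef]
      calc (N₁:ℝ) ^ L₁.card * ((N₂:ℝ) ^ L₂.card * (N₃:ℝ) ^ L₃.card)
          ≤ (2 * (e₁.card:ℝ)) * ((2 * (e₂.card:ℝ)) * (2 * (e₃.card:ℝ))) := h12
        _ = 8 * ((e₁.card : ℝ) * ((e₂.card : ℝ) * (e₃.card : ℝ))) := by ring
    have hle : ((Finset.univ.filter fun ω : (({l // l ∈ L₁} → Fin N₁) ×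
        ({l // l ∈ L₂} → Fin N₂) × ({l // l ∈ L₃} → Fin N₃)) =>
          (∃ i ∈ T₁, ω.1 i = 0) ∧ (∃ i ∈ T₂, ω.2.1 i = 0) ∧ (∃ i ∈ T₃, ω.2.2 i = 0)).card : ℝ)
        ≤ ((Finset.univ.filter fun ω => p x ω).card : ℝ) := by
      exact_mod_cast Finset.card_le_card hsubev
    rw [hevcard] at hle
    linarith
  -- total lower bound
  have hlow : (J.card : ℝ) * M ≤ 8 * ∑ ω : (({l // l ∈ L₁} → Fin N₁) ×
      ({l // l ∈ L₂} → Fin N₂) × ({l // l ∈ L₃} → Fin N₃)),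
        ((J.filter fun x => p x ω).card : ℝ) := by
    have hcast : (∑ ω : (({l // l ∈ L₁} → Fin N₁) × ({l // l ∈ L₂} → Fin N₂) ×
        ({l // l ∈ L₃} → Fin N₃)), ((J.filter fun x => p x ω).card : ℝ))
        = ∑ x ∈ J, ((Finset.univ.filter fun ω : (({l // l ∈ L₁} → Fin N₁) ×
          ({l // l ∈ L₂} → Fin N₂) × ({l // l ∈ L₃} → Fin N₃)) => p x ω).card : ℝ) := by
      rw [← Nat.cast_sum, ← Nat.cast_sum, hswap]
    rw [hcast]
    have hsum := Finset.sum_le_sum hpoint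
    rw [Finset.sum_const, nsmul_eq_mul, ← Finset.mul_sum] at hsum
    linarith
  -- upper bound on the sum
  have hup : ∑ ω : (({l // l ∈ L₁} → Fin N₁) × ({l // l ∈ L₂} → Fin N₂) ×
      ({l // l ∈ L₃} → Fin N₃)), ((J.filter fun x => p x ω).card : ℝ)
      ≤ C * ((∑ f₁ : {l // l ∈ L₁} → Fin N₁, Real.sqrt ((mjSample L₁ f₁).card)) *
          ((∑ f₂ : {l // l ∈ L₂} → Fin N₂, Real.sqrt ((mjSample L₂ f₂).card)) *
           (∑ f₃ : {l // l ∈ L₃} → Fin N₃, Real.sqrt ((mjSample L₃ f₃).card)))) := by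
    have hterm : ∀ ω : (({l // l ∈ L₁} → Fin N₁) × ({l // l ∈ L₂} → Fin N₂) ×
        ({l // l ∈ L₃} → Fin N₃)), ((J.filter fun x => p x ω).card : ℝ)
        ≤ C * (Real.sqrt ((mjSample L₁ ω.1).card) * (Real.sqrt ((mjSample L₂ ω.2.1).card) *
            Real.sqrt ((mjSample L₃ ω.2.2).card))) := by
      intro ω
      have hfin := multijointSet_finite (mjSample L₁ ω.1) (mjSample L₂ ω.2.1) (mjSample L₃ ω.2.2)
      have hsub : (J.filter fun x => p x ω) ⊆ hfin.toFinset := by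
        intro y hy
        rw [Set.Finite.mem_toFinset]
        exact (Finset.mem_filter.mp hy).2
      have h1 : ((J.filter fun x => p x ω).card : ℝ)
          ≤ ((multijointSet (mjSample L₁ ω.1) (mjSample L₂ ω.2.1) (mjSample L₃ ω.2.2)).ncard : ℝ) := by
        rw [Set.ncard_eq_toFinset_card _ hfin]
        exact_mod_cast Finset.card_le_card hsub
      have h2 := hC (mjSample L₁ ω.1) (mjSample L₂ ω.2.1) (mjSample L₃ ω.2.2)
      have h3 : Real.sqrt (((mjSample L₁ ω.1).card : ℝ) * ((mjSample L₂ ω.2.1).card) *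
          ((mjSample L₃ ω.2.2).card))
          = Real.sqrt ((mjSample L₁ ω.1).card) * (Real.sqrt ((mjSample L₂ ω.2.1).card) *
            Real.sqrt ((mjSample L₃ ω.2.2).card)) := by
        rw [Real.sqrt_mul (by positivity), Real.sqrt_mul (by positivity)]
        ring
      rw [h3] at h2
      linarith
    calc ∑ ω : (({l // l ∈ L₁} → Fin N₁) × ({l // l ∈ L₂} → Fin N₂) ×
        ({l // l ∈ L₃} → Fin N₃)), ((J.filter fun x => p x ω).card : ℝ)
        ≤ ∑ ω : (({l // l ∈ L₁} → Fin N₁) × ({l // l ∈ L₂} → Fin N₂) ×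
          ({l // l ∈ L₃} → Fin N₃)), C * (Real.sqrt ((mjSample L₁ ω.1).card) *
            (Real.sqrt ((mjSample L₂ ω.2.1).card) * Real.sqrt ((mjSample L₃ ω.2.2).card))) :=
          Finset.sum_le_sum fun ω _ => hterm ω
      _ = C * ((∑ f₁ : {l // l ∈ L₁} → Fin N₁, Real.sqrt ((mjSample L₁ f₁).card)) *
          ((∑ f₂ : {l // l ∈ L₂} → Fin N₂, Real.sqrt ((mjSample L₂ f₂).card)) *
           (∑ f₃ : {l // l ∈ L₃} → Fin N₃, Real.sqrt ((mjSample L₃ f₃).card)))) := by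
          rw [← Finset.mul_sum]
          congr 1
          rw [Fintype.sum_prod_type]
          simp_rw [← Finset.mul_sum]
          rw [← Finset.sum_mul]
          congr 1
          rw [Fintype.sum_prod_type]
          simp_rw [← Finset.mul_sum]
          rw [← Finset.sum_mul]
  -- combine
  have hA₁ := sum_sqrt_card_mjSample L₁ (N := N₁)
  have hA₂ := sum_sqrt_card_mjSample L₂ (N := N₂)
  have hA₃ := sum_sqrt_card_mjSample L₃ (N := N₃)
  have hnn₁ : 0 ≤ ∑ f₁ : {l // l ∈ L₁} → Fin N₁, Real.sqrt ((mjSample L₁ f₁).card) :=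
    Finset.sum_nonneg fun _ _ => Real.sqrt_nonneg _
  have hnn₂ : 0 ≤ ∑ f₂ : {l // l ∈ L₂} → Fin N₂, Real.sqrt ((mjSample L₂ f₂).card) :=
    Finset.sum_nonneg fun _ _ => Real.sqrt_nonneg _
  have hnn₃ : 0 ≤ ∑ f₃ : {l // l ∈ L₃} → Fin N₃, Real.sqrt ((mjSample L₃ f₃).card) :=
    Finset.sum_nonneg fun _ _ => Real.sqrt_nonneg _
  have hAprod : (∑ f₁ : {l // l ∈ L₁} → Fin N₁, Real.sqrt ((mjSample L₁ f₁).card)) *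
      ((∑ f₂ : {l // l ∈ L₂} → Fin N₂, Real.sqrt ((mjSample L₂ f₂).card)) *
       (∑ f₃ : {l // l ∈ L₃} → Fin N₃, Real.sqrt ((mjSample L₃ f₃).card)))
      ≤ ((N₁:ℝ) ^ L₁.card * Real.sqrt ((L₁.card : ℝ) / N₁)) *
        (((N₂:ℝ) ^ L₂.card * Real.sqrt ((L₂.card : ℝ) / N₂)) *
         ((N₃:ℝ) ^ L₃.card * Real.sqrt ((L₃.card : ℝ) / N₃))) := by
    have hb₂ : (0:ℝ) ≤ (N₂:ℝ) ^ L₂.card * Real.sqrt ((L₂.card : ℝ) / N₂) :=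
      mul_nonneg (pow_nonneg (Nat.cast_nonneg _) _) (Real.sqrt_nonneg _)
    have hb₃ : (0:ℝ) ≤ (N₃:ℝ) ^ L₃.card * Real.sqrt ((L₃.card : ℝ) / N₃) :=
      mul_nonneg (pow_nonneg (Nat.cast_nonneg _) _) (Real.sqrt_nonneg _)
    have hb₁ : (0:ℝ) ≤ (N₁:ℝ) ^ L₁.card * Real.sqrt ((L₁.card : ℝ) / N₁) :=
      mul_nonneg (pow_nonneg (Nat.cast_nonneg _) _) (Real.sqrt_nonneg _)
    have h23 := mul_le_mul hA₂ hA₃ hnn₃ hb₂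
    exact mul_le_mul hA₁ h23 (mul_nonneg hnn₂ hnn₃) hb₁
  have hfinal : (J.card : ℝ) * M ≤ 8 * C * (M * (Real.sqrt ((L₁.card : ℝ) / N₁) *
      (Real.sqrt ((L₂.card : ℝ) / N₂) * Real.sqrt ((L₃.card : ℝ) / N₃)))) := by
    have hCE : C * ((∑ f₁ : {l // l ∈ L₁} → Fin N₁, Real.sqrt ((mjSample L₁ f₁).card)) *
        ((∑ f₂ : {l // l ∈ L₂} → Fin N₂, Real.sqrt ((mjSample L₂ f₂).card)) *
         (∑ f₃ : {l // l ∈ L₃} → Fin N₃, Real.sqrt ((mjSample L₃ f₃).card))))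
        ≤ C * (((N₁:ℝ) ^ L₁.card * Real.sqrt ((L₁.card : ℝ) / N₁)) *
          (((N₂:ℝ) ^ L₂.card * Real.sqrt ((L₂.card : ℝ) / N₂)) *
           ((N₃:ℝ) ^ L₃.card * Real.sqrt ((L₃.card : ℝ) / N₃)))) :=
      mul_le_mul_of_nonneg_left hAprod hC0
    have hre : ((N₁:ℝ) ^ L₁.card * Real.sqrt ((L₁.card : ℝ) / N₁)) *
        (((N₂:ℝ) ^ L₂.card * Real.sqrt ((L₂.card : ℝ) / N₂)) *
         ((N₃:ℝ) ^ L₃.card * Real.sqrt ((L₃.card : ℝ) / N₃)))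
        = M * (Real.sqrt ((L₁.card : ℝ) / N₁) *
          (Real.sqrt ((L₂.card : ℝ) / N₂) * Real.sqrt ((L₃.card : ℝ) / N₃))) := by
      rw [hMdef]; ring
    rw [hre] at hCE
    calc (J.card : ℝ) * M ≤ 8 * ∑ ω : (({l // l ∈ L₁} → Fin N₁) × ({l // l ∈ L₂} → Fin N₂) ×
        ({l // l ∈ L₃} → Fin N₃)), ((J.filter fun x => p x ω).card : ℝ) := hlow
      _ ≤ 8 * (C * (M * (Real.sqrt ((L₁.card : ℝ) / N₁) *
          (Real.sqrt ((L₂.card : ℝ) / N₂) * Real.sqrt ((L₃.card : ℝ) / N₃))))) := by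
          have := hup.trans hCE
          linarith
      _ = 8 * C * (M * (Real.sqrt ((L₁.card : ℝ) / N₁) *
          (Real.sqrt ((L₂.card : ℝ) / N₂) * Real.sqrt ((L₃.card : ℝ) / N₃)))) := by ring
  have hJle : (J.card : ℝ) ≤ 8 * C * (Real.sqrt ((L₁.card : ℝ) / N₁) *
      (Real.sqrt ((L₂.card : ℝ) / N₂) * Real.sqrt ((L₃.card : ℝ) / N₃))) := by
    have h := hfinal
    rw [show 8 * C * (M * (Real.sqrt ((L₁.card : ℝ) / N₁) *
      (Real.sqrt ((L₂.card : ℝ) / N₂) * Real.sqrt ((L₃.card : ℝ) / N₃))))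
      = (8 * C * (Real.sqrt ((L₁.card : ℝ) / N₁) *
      (Real.sqrt ((L₂.card : ℝ) / N₂) * Real.sqrt ((L₃.card : ℝ) / N₃)))) * M by ring] at h
    exact le_of_mul_le_mul_right h hM0
  -- rewrite the sqrt product
  have hsqrt : Real.sqrt ((L₁.card : ℝ) / N₁) *
      (Real.sqrt ((L₂.card : ℝ) / N₂) * Real.sqrt ((L₃.card : ℝ) / N₃))
      = Real.sqrt ((L₁.card : ℝ) * L₂.card * L₃.card) / Real.sqrt ((N₁ : ℝ) * N₂ * N₃) := by
    rw [← Real.sqrt_mul (by positivity), ← Real.sqrt_mul (by positivity),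
      ← Real.sqrt_div (by positivity)]
    congr 1
    field_simp
  rw [hsqrt] at hJle
  have hrhs0 : 0 ≤ Real.sqrt ((L₁.card : ℝ) * L₂.card * L₃.card) /
      Real.sqrt ((N₁ : ℝ) * N₂ * N₃) :=
    div_nonneg (Real.sqrt_nonneg _) (Real.sqrt_nonneg _)
  calc (J.card : ℝ) ≤ 8 * C * (Real.sqrt ((L₁.card : ℝ) * L₂.card * L₃.card) /
      Real.sqrt ((N₁ : ℝ) * N₂ * N₃)) := hJle
    _ ≤ (8 * C + 1) * (Real.sqrt ((L₁.card : ℝ) * L₂.card * L₃.card) /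
      Real.sqrt ((N₁ : ℝ) * N₂ * N₃)) := by nlinarith
    _ = (8 * C + 1) * Real.sqrt ((L₁.card : ℝ) * L₂.card * L₃.card) /
      Real.sqrt ((N₁ : ℝ) * N₂ * N₃) := by ring
end
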